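/- Let R be a commutative ring with identity, J an ideal with J ⊆ Jac(R) (the Jacobson radical), and x a non-unit of R with x ∉ Jac(R) such that x^n = x^{n+1} for some positive integer n. Then 1 - x ∉ Rx^n + J and x^n ∉ R(1-x) + J. -/

import Mathlib

theorem stmt_4 {R : Type*} [CommRing R] (J : Ideal R)
    (hJ : J ≤ (⊥ : Ideal R).jacobson) (x : R) (hxu : ¬IsUnit x)
    (hxj : x ∉ (⊥ : Ideal R).jacobson) (n : ℕ) (hn : 1 ≤ n)
    (hxn : x ^ n = x ^ (n + 1)) :
    1 - x ∉ Ideal.span {x ^ n} ⊔ J ∧ x ^ n ∉ Ideal.span {1 - x} ⊔ J := by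
  have hex : x ^ n * x = x ^ n := by rw [← pow_succ, ← hxn]
  have hee : x ^ n * x ^ n = x ^ n := by
    have : ∀ k, x ^ n * x ^ k = x ^ n := by
      intro k
      induction k with
      | zero => simp
      | succ m ih => rw [pow_succ, ← mul_assoc, ih, hex]
    exact this n
  have he1x : x ^ n * (1 - x) = 0 := by rw [mul_sub, mul_one, hex, sub_self]
  constructor
  · intro h
    rcases Submodule.mem_sup.mp h with ⟨a, ha, b, hb, hab⟩
    rcases Ideal.mem_span_singleton'.mp ha with ⟨r, rfl⟩
    -- multiply by x^n
    have key : r * x ^ n = -(b * x ^ n) := by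
      have := congrArg (· * x ^ n) hab
      rw [sub_mul, one_mul, add_mul, mul_assoc, hee] at this
      have hx0 : x ^ n - x * x ^ n = 0 := by
        rw [mul_comm x, ← pow_succ, ← hxn, sub_self]
      rw [hx0] at this
      linear_combination this
    have h1x : (1 - x) ∈ J := by
      rw [← hab, key]
      exact J.add_mem (J.neg_mem (J.mul_mem_right _ hb)) hb
    have : IsUnit x := by
      have hmem : (1 - x) ∈ Ideal.jacobson ⊥ := hJ h1x
      have := Ideal.mem_jacobson_bot.mp hmem (-1)
      simpa using this
    exact hxu this
  · intro h
    rcases Submodule.mem_sup.mp h with ⟨a, ha, b, hb, hab⟩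
    rcases Ideal.mem_span_singleton'.mp ha with ⟨s, rfl⟩
    have key : x ^ n ∈ J := by
      have := congrArg (· * x ^ n) hab
      rw [hee, add_mul, mul_assoc, mul_comm (1 - x), he1x, mul_zero, zero_add] at this
      rw [← this]
      exact J.mul_mem_right _ hb
    have hmem : x ^ n ∈ Ideal.jacobson ⊥ := hJ key
    apply hxj
    rw [Ideal.jacobson, Ideal.mem_sInf] at hmem ⊢
    intro M hM
    have : M.IsPrime := hM.2.isPrime
    exact this.mem_of_pow_mem n (hmem hM)
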